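/- Let C ⊆ [K] := {1,…,K} with |C| = ηK for some η ∈ (0,1] (so ηK is an integer), and let I := {(j,k) ∈ 𝒢 : j ∉ C or k ∉ C} be the set of pairs involving at least one client outside C, with s := |I|. Let U ∈ ℝ^{Gq×r} have orthonormal columns and satisfy the block incoherence condition max_{g∈𝒢} ‖U^{(g)}‖_F² ≤ μr/G for some μ ≥ 1, where U^{(g)} is the g-th row block of U. Let P_U be the map M ↦ U Uᵀ M on ℝ^{Gq×p} and ρ := ‖P_I ∘ P_U ∘ P_I‖_op. If η > sqrt(1 − 1/(μr) + 1/(4(K−1))), then ρ < 1. -/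

import Mathlib

open Matrix

/-- The set of client pairs `𝒢 = {(j,k) : j < k}`. -/
abbrev PairIdx (K : ℕ) := {g : Fin K × Fin K // g.1 < g.2}

/-- Frobenius norm of a real matrix. -/
noncomputable def frob {m n : Type*} [Fintype m] [Fintype n] (A : Matrix m n ℝ) : ℝ :=
  Real.sqrt (∑ i, ∑ j, (A i j) ^ 2)

/-- Operator norm (w.r.t. the Frobenius norm) of a map on matrices. -/
noncomputable def opNormF {m n : Type*} [Fintype m] [Fintype n]
    (T : Matrix m n ℝ → Matrix m n ℝ) : ℝ :=
  sInf {c | 0 ≤ c ∧ ∀ M, frob (T M) ≤ c * frob M}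

/-- The 0/1 diagonal matrix `Π_I` selecting the rows of the blocks in `I`. -/
def PiMat (K q : ℕ) (I : Finset (PairIdx K)) :
    Matrix (PairIdx K × Fin q) (PairIdx K × Fin q) ℝ :=
  Matrix.diagonal fun gi => if gi.1 ∈ I then 1 else 0

/-- The `g`-th row block of a stacked matrix. -/
def blk {K q p : ℕ} (X : Matrix (PairIdx K × Fin q) (Fin p) ℝ) (g : PairIdx K) :
    Matrix (Fin q) (Fin p) ℝ :=
  fun i j => X (g, i) j

/- ---------- auxiliary lemmas ---------- -/

lemma count_pairs {K : ℕ} (S : Finset (Fin K)) :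
    (Finset.univ.filter (fun g : PairIdx K => g.1.1 ∈ S ∧ g.1.2 ∈ S)).card
      = S.card.choose 2 := by
  rw [← Finset.card_powersetCard 2 S]
  apply Finset.card_bij (fun g _ => ({g.1.1, g.1.2} : Finset (Fin K)))
  · rintro ⟨⟨a, b⟩, hab⟩ hg
    simp only [Finset.mem_filter] at hg
    rw [Finset.mem_powersetCard]
    constructor
    · intro x hx
      simp only [Finset.mem_insert, Finset.mem_singleton] at hx
      rcases hx with h | h <;> subst h
      · exact hg.2.1
      · exact hg.2.2
    · exact Finset.card_pair hab.ne
  · rintro ⟨⟨a, b⟩, hab⟩ _ ⟨⟨c, d⟩, hcd⟩ _ h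
    simp only at h hab hcd
    have ha : a ∈ ({c, d} : Finset (Fin K)) := h ▸ Finset.mem_insert_self a {b}
    have hb : b ∈ ({c, d} : Finset (Fin K)) := h ▸ Finset.mem_insert_of_mem (Finset.mem_singleton_self b)
    have hc : c ∈ ({a, b} : Finset (Fin K)) := h ▸ Finset.mem_insert_self c {d}
    have hd : d ∈ ({a, b} : Finset (Fin K)) := h ▸ Finset.mem_insert_of_mem (Finset.mem_singleton_self d)
    simp only [Finset.mem_insert, Finset.mem_singleton] at ha hb hc hd
    have key : a = c ∧ b = d := by
      rcases ha with rfl | rfl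
      · refine ⟨rfl, ?_⟩
        rcases hd with rfl | rfl
        · exact absurd hcd (lt_irrefl _)
        · rfl
      · exfalso
        rcases hc with rfl | rfl
        · exact absurd hcd (lt_irrefl _)
        · exact absurd (hab.trans hcd) (lt_irrefl _)
    exact Subtype.ext (Prod.ext key.1 key.2)
  · rintro t ht
    rw [Finset.mem_powersetCard] at ht
    obtain ⟨x, y, hxy, rfl⟩ := Finset.card_eq_two.mp ht.2
    rcases lt_or_gt_of_ne hxy with h | h
    · exact ⟨⟨(x, y), h⟩, by
        simp only [Finset.mem_filter, Finset.mem_univ, true_and]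
        exact ⟨ht.1 (Finset.mem_insert_self _ _), ht.1 (Finset.mem_insert_of_mem (Finset.mem_singleton_self _))⟩, rfl⟩
    · exact ⟨⟨(y, x), h⟩, by
        simp only [Finset.mem_filter, Finset.mem_univ, true_and]
        exact ⟨ht.1 (Finset.mem_insert_of_mem (Finset.mem_singleton_self _)), ht.1 (Finset.mem_insert_self _ _)⟩,
        Finset.pair_comm y x⟩

lemma card_pairIdx (K : ℕ) : Fintype.card (PairIdx K) = K.choose 2 := by
  have h := count_pairs (Finset.univ : Finset (Fin K))
  simpa [Finset.filter_true_of_mem, Finset.card_univ] using h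

section aux
variable {m n : Type*} [Fintype m] [Fintype n]

lemma frob_nonneg (A : Matrix m n ℝ) : 0 ≤ frob A := Real.sqrt_nonneg _

lemma frob_sq (A : Matrix m n ℝ) : frob A ^ 2 = ∑ i, ∑ j, (A i j) ^ 2 := by
  rw [frob, Real.sq_sqrt]
  positivity

/-- matrix inner product -/
noncomputable def ip (A B : Matrix m n ℝ) : ℝ := ∑ i, ∑ j, A i j * B i j

lemma ip_self (A : Matrix m n ℝ) : ip A A = frob A ^ 2 := by
  rw [frob_sq, ip]; congr 1; ext i; congr 1; ext j; ring

lemma ip_le (A B : Matrix m n ℝ) : ip A B ≤ frob A * frob B := by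
  have h := Real.sum_mul_le_sqrt_mul_sqrt (Finset.univ : Finset (m × n))
    (fun x => A x.1 x.2) (fun x => B x.1 x.2)
  simpa [ip, frob, Fintype.sum_prod_type] using h

lemma ip_eq_trace (A B : Matrix m n ℝ) : ip A B = Matrix.trace (Aᵀ * B) := by
  rw [ip, Matrix.trace]
  rw [Finset.sum_comm]
  simp [Matrix.mul_apply, Matrix.diag, Matrix.transpose_apply]

end aux

variable {K q p r : ℕ} {μ : ℝ} (I : Finset (PairIdx K)) (U : Matrix (PairIdx K × Fin q) (Fin r) ℝ)

lemma PiMat_transpose : (PiMat K q I)ᵀ = PiMat K q I := Matrix.diagonal_transpose _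

lemma PiMat_mul_apply (X : Matrix (PairIdx K × Fin q) (Fin p) ℝ) (x : PairIdx K × Fin q) (j : Fin p) :
    (PiMat K q I * X) x j = (if x.1 ∈ I then 1 else 0) * X x j := by
  rw [PiMat, Matrix.diagonal_mul]

lemma step2 (M : Matrix (PairIdx K × Fin q) (Fin p) ℝ) :
    frob (Uᵀ * (PiMat K q I * M)) ^ 2
      ≤ frob (PiMat K q I * (U * (Uᵀ * (PiMat K q I * M)))) * frob M := by
  set P := PiMat K q I with hP
  set W := Uᵀ * (P * M) with hW
  have key : ip W W = ip M (P * (U * W)) := by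
    rw [ip_eq_trace, ip_eq_trace, hW]
    have hPT : Pᵀ = P := PiMat_transpose I
    simp only [Matrix.transpose_mul, Matrix.transpose_transpose, hPT, Matrix.mul_assoc]
  calc frob W ^ 2 = ip M (P * (U * W)) := by rw [← ip_self, key]
    _ ≤ frob M * frob (P * (U * W)) := ip_le _ _
    _ = frob (P * (U * W)) * frob M := mul_comm _ _

lemma block_bound (W : Matrix (Fin r) (Fin p) ℝ) (g : PairIdx K) :
    ∑ i, ∑ j, ((U * W) (g, i) j) ^ 2 ≤ frob (blk U g) ^ 2 * frob W ^ 2 := by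
  have h : ∀ i j, ((U * W) (g, i) j) ^ 2
      ≤ (∑ k, (U (g, i) k) ^ 2) * (∑ k, (W k j) ^ 2) := by
    intro i j
    rw [Matrix.mul_apply]
    exact Finset.sum_mul_sq_le_sq_mul_sq _ _ _
  calc ∑ i, ∑ j, ((U * W) (g, i) j) ^ 2
      ≤ ∑ i, ∑ j, (∑ k, (U (g, i) k) ^ 2) * (∑ k, (W k j) ^ 2) := by
        apply Finset.sum_le_sum; intro i _
        apply Finset.sum_le_sum; intro j _
        exact h i j
    _ = (∑ i, ∑ k, (U (g, i) k) ^ 2) * (∑ j, ∑ k, (W k j) ^ 2) := by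
        rw [Finset.sum_mul_sum]
    _ = frob (blk U g) ^ 2 * frob W ^ 2 := by
        rw [frob_sq, frob_sq]
        exact congrArg₂ (· * ·) rfl Finset.sum_comm

lemma step1 (hinc : ∀ g : PairIdx K, frob (blk U g) ^ 2 ≤ μ * r / (Fintype.card (PairIdx K)))
    (hμr : 0 ≤ μ * r) (W : Matrix (Fin r) (Fin p) ℝ) :
    frob (PiMat K q I * (U * W)) ^ 2
      ≤ (I.card * (μ * r / (Fintype.card (PairIdx K)))) * frob W ^ 2 := by
  rw [frob_sq]
  rw [Fintype.sum_prod_type]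
  have hent : ∀ (g : PairIdx K) (i : Fin q) (j : Fin p),
      ((PiMat K q I * (U * W)) (g, i) j) ^ 2
        = (if g ∈ I then 1 else 0) * ((U * W) (g, i) j) ^ 2 := by
    intro g i j
    rw [PiMat_mul_apply]
    by_cases h : g ∈ I <;> simp [h]
  calc ∑ g : PairIdx K, ∑ i, ∑ j, ((PiMat K q I * (U * W)) (g, i) j) ^ 2
      = ∑ g : PairIdx K, (if g ∈ I then 1 else 0) * (∑ i, ∑ j, ((U * W) (g, i) j) ^ 2) := by
        congr 1; ext g
        rw [Finset.mul_sum]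
        congr 1; ext i
        rw [Finset.mul_sum]
        congr 1; ext j
        exact hent g i j
    _ ≤ ∑ g : PairIdx K, (if g ∈ I then 1 else 0) * ((μ * r / (Fintype.card (PairIdx K))) * frob W ^ 2) := by
        apply Finset.sum_le_sum; intro g _
        by_cases h : g ∈ I
        · simp only [h, if_true, one_mul]
          calc ∑ i, ∑ j, ((U * W) (g, i) j) ^ 2 ≤ frob (blk U g) ^ 2 * frob W ^ 2 :=
                block_bound U W g
            _ ≤ (μ * r / (Fintype.card (PairIdx K))) * frob W ^ 2 := by
                apply mul_le_mul_of_nonneg_right (hinc g)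
                positivity
        · simp [h]
    _ = (I.card * (μ * r / (Fintype.card (PairIdx K)))) * frob W ^ 2 := by
        simp only [ite_mul, one_mul, zero_mul]
        rw [Finset.sum_ite_mem, Finset.univ_inter, Finset.sum_const, nsmul_eq_mul]
        ring

lemma arith_core (η x e : ℝ) (hη1 : η ≤ 1)
    (hx : 1 ≤ x) (he1 : 1 ≤ e)
    (hsq : 1 - 1 / x + 1 / (4 * e) < η ^ 2) :
    ((e + 1) * e / 2 - η * (e + 1) * (η * (e + 1) - 1) / 2) * x < (e + 1) * e / 2 := by
  have hxpos : 0 < x := by linarith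
  have hepos : 0 < e := by linarith
  have h3 : 4 * e * x - 4 * e + x < 4 * e * x * η ^ 2 := by
    have hmul := mul_lt_mul_of_pos_left hsq (show (0:ℝ) < 4 * e * x by positivity)
    have hid : 4 * e * x * (1 - 1 / x + 1 / (4 * e)) = 4 * e * x - 4 * e + x := by
      field_simp
    rw [hid] at hmul
    exact hmul
  have hmid : x * (e - η * (η * (e + 1) - 1)) < e := by
    nlinarith [mul_nonneg (by linarith : (0:ℝ) ≤ x) (sq_nonneg (1 - 2 * η))]
  have h4 := mul_lt_mul_of_pos_left hmid (show (0:ℝ) < e + 1 by linarith)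
  nlinarith [h4]

lemma arith_key {K a : ℕ} (hK : 2 ≤ K) (η : ℝ) (x : ℝ) (hη1 : η ≤ 1)
    (hx : 1 ≤ x) (ha : (a : ℝ) = η * K)
    (hsq : 1 - 1 / x + 1 / (4 * ((K : ℝ) - 1)) < η ^ 2) :
    (((K.choose 2 : ℕ) : ℝ) - ((a.choose 2 : ℕ) : ℝ)) * x < ((K.choose 2 : ℕ) : ℝ) := by
  have hK2 : (2 : ℝ) ≤ (K : ℝ) := by exact_mod_cast hK
  have he1 : 1 ≤ (K : ℝ) - 1 := by linarith
  have h := arith_core η x ((K : ℝ) - 1) hη1 hx he1 hsq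
  rw [Nat.cast_choose_two, Nat.cast_choose_two, ha]
  nlinarith [h]

/-- if `η > sqrt(1 − 1/(μr) + 1/(4(K−1)))` then `ρ < 1`. -/
theorem stmt2 {K q p r : ℕ} (hK : 2 ≤ K) (hq : 1 ≤ q) (hp : 1 ≤ p) (hr : 1 ≤ r)
    (C : Finset (Fin K)) (η : ℝ) (hη0 : 0 < η) (hη1 : η ≤ 1)
    (hCcard : (C.card : ℝ) = η * K)
    (U : Matrix (PairIdx K × Fin q) (Fin r) ℝ) (hU : Uᵀ * U = 1)
    (μ : ℝ) (hμ : 1 ≤ μ)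
    (hinc : ∀ g : PairIdx K, frob (blk U g) ^ 2 ≤ μ * r / (Fintype.card (PairIdx K)))
    (hη : η > Real.sqrt (1 - 1 / (μ * r) + 1 / (4 * ((K : ℝ) - 1)))) :
    opNormF (fun M : Matrix (PairIdx K × Fin q) (Fin p) ℝ =>
        PiMat K q {g : PairIdx K | g.1.1 ∉ C ∨ g.1.2 ∉ C} *
          (U * (Uᵀ * (PiMat K q {g : PairIdx K | g.1.1 ∉ C ∨ g.1.2 ∉ C} * M)))) < 1 := by
  classical
  set I : Finset (PairIdx K) := {g : PairIdx K | g.1.1 ∉ C ∨ g.1.2 ∉ C} with hI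
  set N : ℕ := Fintype.card (PairIdx K) with hN
  set c : ℝ := I.card * (μ * r / N) with hc
  -- basic positivity facts
  have hx1 : (1 : ℝ) ≤ μ * r := by
    have : (1 : ℝ) ≤ (r : ℝ) := by exact_mod_cast hr
    nlinarith
  have hμr : (0 : ℝ) ≤ μ * r := by linarith
  have hNchoose : N = K.choose 2 := card_pairIdx K
  have hNpos : 0 < N := by
    rw [hNchoose]
    exact Nat.choose_pos hK
  have hNposR : (0 : ℝ) < N := by exact_mod_cast hNpos
  have hc0 : 0 ≤ c := by
    rw [hc]
    positivity
  -- cardinality of I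
  have hcardI : I.card + (C.card.choose 2) = N := by
    have hsplit := Finset.card_filter_add_card_filter_not
      (s := (Finset.univ : Finset (PairIdx K)))
      (p := fun g : PairIdx K => g.1.1 ∈ C ∧ g.1.2 ∈ C)
    have hIeq : (Finset.univ.filter (fun g : PairIdx K => ¬(g.1.1 ∈ C ∧ g.1.2 ∈ C))) = I := by
      rw [hI]
      apply Finset.filter_congr
      intro g _
      tauto
    rw [hIeq, count_pairs] at hsplit
    rw [Nat.add_comm] at hsplit
    rw [hsplit, hN, Finset.card_univ]
  -- c < 1
  have hc1 : c < 1 := by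
    have hsq : 1 - 1 / (μ * r) + 1 / (4 * ((K : ℝ) - 1)) < η ^ 2 :=
      (Real.sqrt_lt' hη0).mp hη
    have hkey := arith_key hK η (μ * r) hη1 hx1 hCcard hsq
    have hIcard : (I.card : ℝ) = ((K.choose 2 : ℕ) : ℝ) - ((C.card.choose 2 : ℕ) : ℝ) := by
      have : (I.card : ℝ) + ((C.card.choose 2 : ℕ) : ℝ) = ((N : ℕ) : ℝ) := by
        exact_mod_cast congrArg (Nat.cast : ℕ → ℝ) hcardI
      rw [hNchoose] at this
      linarith
    rw [hc, hIcard]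
    calc (((K.choose 2 : ℕ) : ℝ) - ((C.card.choose 2 : ℕ) : ℝ)) * (μ * ↑r / ↑N)
        = ((((K.choose 2 : ℕ) : ℝ) - ((C.card.choose 2 : ℕ) : ℝ)) * (μ * ↑r)) / ↑N := by ring
      _ < 1 := by
            rw [div_lt_one hNposR]
            calc (((K.choose 2 : ℕ) : ℝ) - ((C.card.choose 2 : ℕ) : ℝ)) * (μ * ↑r)
                < ((K.choose 2 : ℕ) : ℝ) := hkey
              _ = (N : ℝ) := by rw [hNchoose]
  -- the operator bound
  have hbound : ∀ M : Matrix (PairIdx K × Fin q) (Fin p) ℝ,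
      frob (PiMat K q I * (U * (Uᵀ * (PiMat K q I * M)))) ≤ c * frob M := by
    intro M
    set W := Uᵀ * (PiMat K q I * M) with hW
    set F := frob (PiMat K q I * (U * W)) with hF
    have hF0 : 0 ≤ F := frob_nonneg _
    have hM0 : 0 ≤ frob M := frob_nonneg _
    have h1 : F ^ 2 ≤ c * frob W ^ 2 := by
      rw [hF, hc, hN]
      exact step1 I U hinc hμr W
    have h2 : frob W ^ 2 ≤ F * frob M := by
      rw [hW, hF]
      exact step2 I U M
    rcases eq_or_lt_of_le hF0 with hF0' | hFpos
    · rw [← hF0']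
      exact mul_nonneg hc0 hM0
    · have hchain : F ^ 2 ≤ c * (F * frob M) :=
        h1.trans (mul_le_mul_of_nonneg_left h2 hc0)
      have h3 : F * F ≤ (c * frob M) * F := by
        have e1 : F * F = F ^ 2 := by ring
        have e2 : (c * frob M) * F = c * (F * frob M) := by ring
        rw [e1, e2]
        exact hchain
      exact le_of_mul_le_mul_right h3 hFpos
  -- conclude via csInf
  have hmem : c ∈ {c | 0 ≤ c ∧ ∀ M : Matrix (PairIdx K × Fin q) (Fin p) ℝ,
      frob (PiMat K q I * (U * (Uᵀ * (PiMat K q I * M)))) ≤ c * frob M} := ⟨hc0, hbound⟩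
  have hbdd : BddBelow {c | 0 ≤ c ∧ ∀ M : Matrix (PairIdx K × Fin q) (Fin p) ℝ,
      frob (PiMat K q I * (U * (Uᵀ * (PiMat K q I * M)))) ≤ c * frob M} :=
    ⟨0, fun x hx => hx.1⟩
  have hle : opNormF (fun M : Matrix (PairIdx K × Fin q) (Fin p) ℝ =>
      PiMat K q I * (U * (Uᵀ * (PiMat K q I * M)))) ≤ c := csInf_le hbdd hmem
  exact lt_of_le_of_lt hle hc1
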